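/- Let a, b, c be distinct positive integers and suppose the GCD matrix on (a,b,c) is totally nonnegative. Then gcd(a,b) * gcd(b,c) = b * gcd(a,c). -/

import Mathlib

/-- A real matrix is totally nonnegative if every square minor is nonnegative. -/
def TotallyNonneg {n : ℕ} (A : Matrix (Fin n) (Fin n) ℝ) : Prop :=
  ∀ (k : ℕ) (r c : Fin k → Fin n), StrictMono r → StrictMono c →
    0 ≤ (A.submatrix r c).det

theorem gcd_matrix_three_TN_implies (a b c : ℕ) (ha : 0 < a) (hb : 0 < b) (hc : 0 < c)
    (hab : a ≠ b) (hbc : b ≠ c) (hac : a ≠ c)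
    (x : Fin 3 → ℕ) (hx : x = ![a, b, c])
    (S : Matrix (Fin 3) (Fin 3) ℝ)
    (hS : ∀ i j, S i j = (Nat.gcd (x i) (x j) : ℝ))
    (hTN : TotallyNonneg S) :
    Nat.gcd a b * Nat.gcd b c = b * Nat.gcd a c := by
  -- one direction: number theory
  have hdvd : Nat.gcd a b * Nat.gcd b c ∣ b * Nat.gcd a c := by
    have h1 : Nat.gcd a b * Nat.gcd b c ∣ a * b :=
      mul_dvd_mul (Nat.gcd_dvd_left a b) (Nat.gcd_dvd_left b c)
    have h2 : Nat.gcd a b * Nat.gcd b c ∣ b * c :=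
      mul_dvd_mul (Nat.gcd_dvd_right a b) (Nat.gcd_dvd_right b c)
    have := Nat.dvd_gcd (h1.trans (dvd_of_eq (mul_comm a b))) h2
    rwa [Nat.gcd_mul_left] at this
  have hle : Nat.gcd a b * Nat.gcd b c ≤ b * Nat.gcd a c :=
    Nat.le_of_dvd (Nat.mul_pos hb (Nat.gcd_pos_of_pos_left c ha)) hdvd
  -- other direction: TN minor with rows {0,1}, cols {1,2}
  have hr : StrictMono (![0, 1] : Fin 2 → Fin 3) := by decide
  have hc' : StrictMono (![1, 2] : Fin 2 → Fin 3) := by decide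
  have hm := hTN 2 ![0, 1] ![1, 2] hr hc'
  rw [Matrix.det_fin_two] at hm
  simp only [Matrix.submatrix_apply] at hm
  have e01 : S 0 1 = (Nat.gcd a b : ℝ) := by rw [hS]; subst hx; norm_num
  have e12 : S 1 2 = (Nat.gcd b c : ℝ) := by rw [hS]; subst hx; norm_num; rfl
  have e02 : S 0 2 = (Nat.gcd a c : ℝ) := by rw [hS]; subst hx; norm_num; rfl
  have e11 : S 1 1 = (b : ℝ) := by rw [hS]; subst hx; norm_num
  have hm' : (b * Nat.gcd a c : ℝ) ≤ (Nat.gcd a b * Nat.gcd b c : ℝ) := by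
    have : (![0,1] : Fin 2 → Fin 3) 0 = 0 := rfl
    simp only [Matrix.cons_val_zero, Matrix.cons_val_one, Matrix.head_cons] at hm
    rw [e01, e12, e02, e11] at hm
    linarith
  have hge : b * Nat.gcd a c ≤ Nat.gcd a b * Nat.gcd b c := by exact_mod_cast hm'
  omega
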